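/- Let λ ∈ [0, 1), let ω be holomorphic on the open unit disk D with |ω(z)| ≤ 1 for all z ∈ D, let c ∈ ℂ, and let A_λ denote the continuous extension to the closed unit disk of A_λ(z) = 1 + c·z − λ·z·∫₀ᶻ ω(t) dt (segment integral). Then for all z₁, z₂ in the closed unit disk with z₁ ≠ z₂, |z₁·A_λ(z₂) − z₂·A_λ(z₁)| ≥ (1 − λ·|z₁·z₂|)·|z₁ − z₂| > 0. In particular the map z ↦ z/A_λ(z) is injective on the set of points of the closed unit disk where A_λ ≠ 0. (This is Theorem 2(b): a meromorphic f with f(0) = 0, f'(0) = 1 satisfying |z/f(z) − z(z/f(z))' − 1| < λ on D for some λ ∈ (0,1) is univalent in the closed unit disk.) -/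

import Mathlib

open Complex Metric

/-- Contour integral of `ω` along the straight line segment from `z₁` to `z₂`:
`∫_{z₁}^{z₂} ω(t) dt = (z₂ - z₁) ∫₀¹ ω(z₁ + s (z₂ - z₁)) ds`. -/
noncomputable def segInt (ω : ℂ → ℂ) (z₁ z₂ : ℂ) : ℂ :=
  (z₂ - z₁) * ∫ s in (0:ℝ)..(1:ℝ), ω (z₁ + (s : ℂ) * (z₂ - z₁))

open intervalIntegral in

/-- The segment integral from `0` is a primitive of `ω` on the unit ball. -/
lemma hasDerivAt_segInt (ω : ℂ → ℂ)
    (hω : DifferentiableOn ℂ ω (ball (0 : ℂ) 1))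
    (hbd : ∀ z ∈ ball (0 : ℂ) 1, ‖ω z‖ ≤ 1)
    {z₀ : ℂ} (hz₀ : z₀ ∈ ball (0 : ℂ) 1) :
    HasDerivAt (fun z => segInt ω 0 z) (ω z₀) z₀ := by
  have hz₀n : ‖z₀‖ < 1 := by simpa [mem_ball] using hz₀
  set R : ℝ := (1 + ‖z₀‖) / 2 with hR
  have hRlt : R < 1 := by rw [hR]; linarith
  have hz₀R : ‖z₀‖ < R := by rw [hR]; linarith
  have hR0 : 0 ≤ R := by positivity
  set ε : ℝ := R - ‖z₀‖ with hε
  have hε0 : 0 < ε := by rw [hε, hR]; linarith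
  -- membership facts
  have hmem : ∀ {z : ℂ}, z ∈ ball z₀ ε → ‖z‖ < R := by
    intro z hz
    have := mem_ball_iff_norm.mp hz
    calc ‖z‖ = ‖z₀ + (z - z₀)‖ := by ring_nf
    _ ≤ ‖z₀‖ + ‖z - z₀‖ := norm_add_le _ _
    _ < ‖z₀‖ + ε := by linarith
    _ = R := by simp [hε]
  have hball : ∀ {t : ℝ} {z : ℂ}, |t| ≤ 1 → ‖z‖ < 1 → (t : ℂ) * z ∈ ball (0 : ℂ) 1 := by
    intro t z ht hz
    simp only [mem_ball, dist_zero_right, norm_mul, Complex.norm_real, Real.norm_eq_abs]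
    calc |t| * ‖z‖ ≤ 1 * ‖z‖ := by gcongr
    _ < 1 := by simpa using hz
  -- continuity of deriv ω
  have hA : AnalyticOnNhd ℂ ω (ball (0 : ℂ) 1) := hω.analyticOnNhd isOpen_ball
  have hdc : ContinuousOn (deriv ω) (ball (0 : ℂ) 1) := hA.deriv.continuousOn
  obtain ⟨C, hC⟩ := (isCompact_closedBall (0 : ℂ) R).exists_bound_of_continuousOn
    (hdc.mono (closedBall_subset_ball hRlt))
  have hC0 : 0 ≤ C := le_trans (norm_nonneg _) (hC 0 (by simp [hR0]))
  -- the parametric derivative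
  set F' : ℂ → ℝ → ℂ := fun z t => ω ((t : ℂ) * z) + (t : ℂ) * z * deriv ω ((t : ℂ) * z)
    with hF'
  have key := intervalIntegral.hasDerivAt_integral_of_dominated_loc_of_deriv_le
    (F := fun (z : ℂ) (t : ℝ) => z * ω ((t : ℂ) * z)) (F' := F') (x₀ := z₀)
    (bound := fun _ => 1 + C) (μ := MeasureTheory.volume) (a := 0) (b := 1) (ball_mem_nhds z₀ hε0)
    ?meas ?int ?meas' ?bnd ?bint ?diff
  case meas =>
    filter_upwards [ball_mem_nhds z₀ hε0] with x hx
    have hx1 : ‖x‖ < 1 := (hmem hx).trans hRlt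
    refine (ContinuousOn.aestronglyMeasurable ?_ measurableSet_uIoc)
    refine ContinuousOn.mul continuousOn_const ?_
    refine hω.continuousOn.comp ((Complex.continuous_ofReal.mul continuous_const).continuousOn) ?_
    intro t ht
    have ht' : t ∈ Set.Ioc (0:ℝ) 1 := by rwa [Set.uIoc_of_le zero_le_one] at ht
    exact hball (abs_le.mpr ⟨by linarith [ht'.1], ht'.2⟩) hx1
  case int =>
    refine (ContinuousOn.intervalIntegrable ?_)
    refine ContinuousOn.mul continuousOn_const ?_
    refine hω.continuousOn.comp ((Complex.continuous_ofReal.mul continuous_const).continuousOn) ?_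
    intro t ht
    have ht' : t ∈ Set.Icc (0:ℝ) 1 := by rwa [Set.uIcc_of_le zero_le_one] at ht
    exact hball (abs_le.mpr ⟨by linarith [ht'.1], ht'.2⟩) hz₀n
  case meas' =>
    refine (ContinuousOn.aestronglyMeasurable ?_ measurableSet_uIoc)
    have hmaps : ∀ t ∈ Set.uIoc (0:ℝ) 1, (t : ℂ) * z₀ ∈ ball (0:ℂ) 1 := by
      intro t ht
      have ht' : t ∈ Set.Ioc (0:ℝ) 1 := by rwa [Set.uIoc_of_le zero_le_one] at ht
      exact hball (abs_le.mpr ⟨by linarith [ht'.1], ht'.2⟩) hz₀n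
    have hcont : ContinuousOn (fun t : ℝ => (t : ℂ) * z₀) (Set.uIoc (0:ℝ) 1) :=
      (Complex.continuous_ofReal.mul continuous_const).continuousOn
    exact (hω.continuousOn.comp hcont hmaps).add (hcont.mul (hdc.comp hcont hmaps))
  case bnd =>
    refine MeasureTheory.ae_of_all _ fun t ht z hz => ?_
    have ht' : t ∈ Set.Ioc (0:ℝ) 1 := by rwa [Set.uIoc_of_le zero_le_one] at ht
    have ht1 : |t| ≤ 1 := abs_le.mpr ⟨by linarith [ht'.1], ht'.2⟩
    have hzR : ‖z‖ < R := hmem hz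
    have htz : (t : ℂ) * z ∈ ball (0 : ℂ) 1 := hball ht1 (hzR.trans hRlt)
    have h1 : ‖ω ((t : ℂ) * z)‖ ≤ 1 := hbd _ htz
    have h2 : ‖deriv ω ((t : ℂ) * z)‖ ≤ C := by
      refine hC _ ?_
      simp only [mem_closedBall, dist_zero_right, norm_mul, Complex.norm_real,
        Real.norm_eq_abs]
      nlinarith [abs_nonneg t, norm_nonneg z]
    calc ‖F' z t‖ ≤ ‖ω ((t : ℂ) * z)‖ + ‖(t : ℂ) * z * deriv ω ((t : ℂ) * z)‖ :=
          norm_add_le _ _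
    _ ≤ 1 + C := by
        refine add_le_add h1 ?_
        rw [norm_mul, norm_mul, Complex.norm_real, Real.norm_eq_abs]
        have htz1 : |t| * ‖z‖ ≤ 1 := mul_le_one₀ ht1 (norm_nonneg z) (hzR.trans hRlt).le
        have := mul_le_mul htz1 h2 (norm_nonneg _) zero_le_one
        linarith
  case bint => exact intervalIntegrable_const
  case diff =>
    refine MeasureTheory.ae_of_all _ fun t ht z hz => ?_
    have ht' : t ∈ Set.Ioc (0:ℝ) 1 := by rwa [Set.uIoc_of_le zero_le_one] at ht
    have ht1 : |t| ≤ 1 := abs_le.mpr ⟨by linarith [ht'.1], ht'.2⟩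
    have htz : (t : ℂ) * z ∈ ball (0 : ℂ) 1 := hball ht1 ((hmem hz).trans hRlt)
    have h1 : HasDerivAt (fun x : ℂ => (t : ℂ) * x) t z := by
      simpa using (hasDerivAt_id z).const_mul (t : ℂ)
    have h2 : HasDerivAt ω (deriv ω ((t : ℂ) * z)) ((t : ℂ) * z) :=
      (hω.differentiableAt (isOpen_ball.mem_nhds htz)).hasDerivAt
    have h3 := (h2.comp z h1)
    have h4 := (hasDerivAt_id z).mul h3
    simp only [Function.comp_def] at h4
    refine h4.congr_deriv ?_
    rw [hF']; simp only [id]; ring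
  obtain ⟨-, hD⟩ := key
  -- identify the integral of F' z₀ with ω z₀
  have hint : (∫ t in (0:ℝ)..1, F' z₀ t) = ω z₀ := by
    have hcd : ∀ t ∈ Set.uIcc (0:ℝ) 1,
        HasDerivAt (fun s : ℝ => (s : ℂ) * ω ((s : ℂ) * z₀)) (F' z₀ t) t := by
      intro t ht
      have ht' : t ∈ Set.Icc (0:ℝ) 1 := by rwa [Set.uIcc_of_le zero_le_one] at ht
      have ht1 : |t| ≤ 1 := abs_le.mpr ⟨by linarith [ht'.1], ht'.2⟩
      have htz : (t : ℂ) * z₀ ∈ ball (0 : ℂ) 1 := hball ht1 hz₀n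
      have h1 : HasDerivAt (fun w : ℂ => w * z₀) z₀ ((t : ℂ)) := by
        simpa using (hasDerivAt_id ((t:ℂ))).mul_const z₀
      have h2 : HasDerivAt ω (deriv ω ((t : ℂ) * z₀)) ((t : ℂ) * z₀) :=
        (hω.differentiableAt (isOpen_ball.mem_nhds htz)).hasDerivAt
      have h3 := h2.comp ((t:ℂ)) h1
      have h4 := (hasDerivAt_id ((t:ℂ))).mul h3
      simp only [Function.comp_def] at h4
      have h5 := h4.comp_ofReal
      refine h5.congr_deriv ?_
      rw [hF']; simp only [id]; ring
    have hintg : IntervalIntegrable (F' z₀) MeasureTheory.volume 0 1 := by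
      refine ContinuousOn.intervalIntegrable ?_
      have hmaps : ∀ t ∈ Set.uIcc (0:ℝ) 1, (t : ℂ) * z₀ ∈ ball (0:ℂ) 1 := by
        intro t ht
        have ht' : t ∈ Set.Icc (0:ℝ) 1 := by rwa [Set.uIcc_of_le zero_le_one] at ht
        exact hball (abs_le.mpr ⟨by linarith [ht'.1], ht'.2⟩) hz₀n
      have hcont : ContinuousOn (fun t : ℝ => (t : ℂ) * z₀) (Set.uIcc (0:ℝ) 1) :=
        (Complex.continuous_ofReal.mul continuous_const).continuousOn
      exact (hω.continuousOn.comp hcont hmaps).add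
        ((hcont.mul (hdc.comp hcont hmaps)).congr (fun t ht => rfl))
    have := intervalIntegral.integral_eq_sub_of_hasDerivAt hcd hintg
    simpa using this
  rw [hint] at hD
  have : (fun z : ℂ => segInt ω 0 z) = fun z => ∫ t in (0:ℝ)..1, z * ω ((t:ℂ) * z) := by
    funext z
    simp [segInt, intervalIntegral.integral_const_mul]
  rw [this]
  exact hD

/-- **Theorem 2(b).** Let `λ ∈ [0,1)` and let `Aₗ` be the continuous extension
to the closed unit disk of `Aₗ(z) = 1 + c z - λ z ∫₀ᶻ ω(t) dt` (with `ω`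
holomorphic, `|ω| ≤ 1` on the open disk). Then for distinct `z₁, z₂` in the
closed disk, `|z₁ Aₗ(z₂) - z₂ Aₗ(z₁)| ≥ (1 - λ |z₁ z₂|) |z₁ - z₂| > 0`; in
particular `z ↦ z / Aₗ(z)` is injective on the points of the closed disk where
`Aₗ ≠ 0`. -/
theorem stmt_6 (lam : ℝ) (hlam : lam ∈ Set.Ico (0 : ℝ) 1)
    (ω : ℂ → ℂ) (c : ℂ)
    (hω : DifferentiableOn ℂ ω (ball (0 : ℂ) 1))
    (hbd : ∀ z ∈ ball (0 : ℂ) 1, ‖ω z‖ ≤ 1)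
    (Al : ℂ → ℂ)
    (hAlcont : ContinuousOn Al (closedBall (0 : ℂ) 1))
    (hAl : ∀ z ∈ ball (0 : ℂ) 1, Al z = 1 + c * z - (lam : ℂ) * z * segInt ω 0 z) :
    (∀ z₁ ∈ closedBall (0 : ℂ) 1, ∀ z₂ ∈ closedBall (0 : ℂ) 1, z₁ ≠ z₂ →
        (1 - lam * ‖z₁ * z₂‖) * ‖z₁ - z₂‖ ≤ ‖z₁ * Al z₂ - z₂ * Al z₁‖ ∧
          0 < (1 - lam * ‖z₁ * z₂‖) * ‖z₁ - z₂‖) ∧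
      Set.InjOn (fun z => z / Al z) {z ∈ closedBall (0 : ℂ) 1 | Al z ≠ 0} := by
  -- Lipschitz bound for the primitive
  have hlip : ∀ z₁ ∈ ball (0:ℂ) 1, ∀ z₂ ∈ ball (0:ℂ) 1,
      ‖segInt ω 0 z₂ - segInt ω 0 z₁‖ ≤ ‖z₂ - z₁‖ := by
    intro z₁ h1 z₂ h2
    have := Convex.norm_image_sub_le_of_norm_hasDerivWithin_le
      (f := fun z => segInt ω 0 z) (f' := ω) (s := ball (0:ℂ) 1)
      (fun x hx => (hasDerivAt_segInt ω hω hbd hx).hasDerivWithinAt)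
      hbd (convex_ball _ _) h1 h2
    simpa using this
  -- the inequality on the open ball
  have hopen : ∀ p : ℂ × ℂ, p ∈ (ball (0:ℂ) 1) ×ˢ (ball (0:ℂ) 1) →
      (1 - lam * ‖p.1 * p.2‖) * ‖p.1 - p.2‖ ≤ ‖p.1 * Al p.2 - p.2 * Al p.1‖ := by
    rintro ⟨z₁, z₂⟩ ⟨h1, h2⟩
    simp only
    rw [hAl z₁ h1, hAl z₂ h2]
    have key : z₁ * (1 + c*z₂ - (lam:ℂ)*z₂*segInt ω 0 z₂)
        - z₂ * (1 + c*z₁ - (lam:ℂ)*z₁*segInt ω 0 z₁)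
        = (z₁ - z₂) - ((lam:ℂ) * (z₁*z₂)) * (segInt ω 0 z₂ - segInt ω 0 z₁) := by ring
    rw [key]
    have h3 : ‖((lam:ℂ) * (z₁*z₂)) * (segInt ω 0 z₂ - segInt ω 0 z₁)‖
        ≤ lam * ‖z₁*z₂‖ * ‖z₁ - z₂‖ := by
      rw [norm_mul, norm_mul, Complex.norm_real, Real.norm_eq_abs, _root_.abs_of_nonneg hlam.1]
      have h4 : ‖segInt ω 0 z₂ - segInt ω 0 z₁‖ ≤ ‖z₁ - z₂‖ := by
        rw [norm_sub_rev z₁ z₂]; exact hlip z₁ h1 z₂ h2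
      exact mul_le_mul_of_nonneg_left h4 (mul_nonneg hlam.1 (norm_nonneg _))
    calc (1 - lam * ‖z₁*z₂‖) * ‖z₁ - z₂‖
        = ‖z₁ - z₂‖ - lam * ‖z₁*z₂‖ * ‖z₁ - z₂‖ := by ring
      _ ≤ ‖z₁ - z₂‖ - ‖((lam:ℂ) * (z₁*z₂)) * (segInt ω 0 z₂ - segInt ω 0 z₁)‖ := by
          linarith
      _ ≤ ‖(z₁ - z₂) - ((lam:ℂ) * (z₁*z₂)) * (segInt ω 0 z₂ - segInt ω 0 z₁)‖ :=
          norm_sub_norm_le _ _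
  -- extend to the closed ball by continuity
  have hs : closure ((ball (0:ℂ) 1) ×ˢ (ball (0:ℂ) 1))
      = (closedBall (0:ℂ) 1) ×ˢ (closedBall (0:ℂ) 1) := by
    rw [closure_prod_eq, closure_ball (0:ℂ) one_ne_zero]
  have hcl : ∀ z₁ ∈ closedBall (0:ℂ) 1, ∀ z₂ ∈ closedBall (0:ℂ) 1,
      (1 - lam * ‖z₁ * z₂‖) * ‖z₁ - z₂‖ ≤ ‖z₁ * Al z₂ - z₂ * Al z₁‖ := by
    intro z₁ h1 z₂ h2
    refine le_on_closure (f := fun p : ℂ × ℂ => (1 - lam * ‖p.1 * p.2‖) * ‖p.1 - p.2‖)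
      (g := fun p : ℂ × ℂ => ‖p.1 * Al p.2 - p.2 * Al p.1‖) hopen ?_ ?_
      (x := (z₁, z₂)) (by rw [hs]; exact ⟨h1, h2⟩)
    · exact ((continuous_const.sub (continuous_const.mul
        ((continuous_fst.mul continuous_snd).norm))).mul
        ((continuous_fst.sub continuous_snd).norm)).continuousOn
    · rw [hs]
      have hA1 : ContinuousOn (fun p : ℂ × ℂ => Al p.1)
          ((closedBall (0:ℂ) 1) ×ˢ (closedBall (0:ℂ) 1)) :=
        hAlcont.comp continuous_fst.continuousOn (fun p hp => hp.1)
      have hA2 : ContinuousOn (fun p : ℂ × ℂ => Al p.2)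
          ((closedBall (0:ℂ) 1) ×ˢ (closedBall (0:ℂ) 1)) :=
        hAlcont.comp continuous_snd.continuousOn (fun p hp => hp.2)
      exact ((continuous_fst.continuousOn.mul hA2).sub
        (continuous_snd.continuousOn.mul hA1)).norm
  have hmain : ∀ z₁ ∈ closedBall (0 : ℂ) 1, ∀ z₂ ∈ closedBall (0 : ℂ) 1, z₁ ≠ z₂ →
      (1 - lam * ‖z₁ * z₂‖) * ‖z₁ - z₂‖ ≤ ‖z₁ * Al z₂ - z₂ * Al z₁‖ ∧
        0 < (1 - lam * ‖z₁ * z₂‖) * ‖z₁ - z₂‖ := by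
    intro z₁ h1 z₂ h2 hne
    refine ⟨hcl z₁ h1 z₂ h2, ?_⟩
    have hn1 : ‖z₁‖ ≤ 1 := by simpa [mem_closedBall, dist_zero_right] using h1
    have hn2 : ‖z₂‖ ≤ 1 := by simpa [mem_closedBall, dist_zero_right] using h2
    have h12 : ‖z₁ * z₂‖ ≤ 1 := by
      rw [norm_mul]; exact mul_le_one₀ hn1 (norm_nonneg _) hn2
    have hlt : lam * ‖z₁ * z₂‖ < 1 :=
      lt_of_le_of_lt (mul_le_of_le_one_right hlam.1 h12) hlam.2
    have hzpos : 0 < ‖z₁ - z₂‖ := by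
      rw [norm_pos_iff]; exact sub_ne_zero.mpr hne
    exact mul_pos (by linarith) hzpos
  refine ⟨hmain, ?_⟩
  rintro a ⟨ha, hAa⟩ b ⟨hb, hAb⟩ hab
  by_contra hne
  obtain ⟨hle, hpos⟩ := hmain a ha b hb hne
  have heq : a * Al b = b * Al a := (div_eq_div_iff hAa hAb).mp hab
  rw [heq, sub_self, norm_zero] at hle
  linarith
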